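/- In the sequence δ(k) = U^d A^k G U^d A^{d-k} (with 0 < k < d), the maximum number of stacking pairs formable within the sequence alone is d-1, while the concatenation-disjoint pairing of δ(k) with its reverse-complement counterpart δ̄(k) = U^{d-k} A^d G U^k A^d can form 3d-2 stacking pairs. -/

import Mathlib

inductive Base : Type
  | A | U | G | C
deriving DecidableEq, Repr

open Base

def isWC : Base → Base → Prop := fun x y =>
  (x = A ∧ y = U) ∨ (x = U ∧ y = A) ∨ (x = C ∧ y = G) ∨ (x = G ∧ y = C)

instance (x y : Base) : Decidable (isWC x y) := by unfold isWC; infer_instance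

def at' (S : List Base) (i : ℕ) : Base := S.getD i Base.A

def ValidSS (S : List Base) (P : Finset (ℕ × ℕ)) : Prop :=
  (∀ p ∈ P, p.1 + 2 ≤ p.2 ∧ p.2 < S.length ∧ isWC (at' S p.1) (at' S p.2)) ∧
  (∀ p ∈ P, ∀ q ∈ P, p ≠ q → p.1 ≠ q.1 ∧ p.1 ≠ q.2 ∧ p.2 ≠ q.1 ∧ p.2 ≠ q.2)

def numSP (P : Finset (ℕ × ℕ)) : ℕ :=
  (P.filter (fun p => (p.1 + 1, p.2 - 1) ∈ P ∧ p.1 + 4 ≤ p.2)).card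

def rep (b : Base) (k : ℕ) : List Base := List.replicate k b

/-- `δ(k) = U^d A^k G U^d A^{d-k}`. -/
def dseq (d k : ℕ) : List Base := rep U d ++ rep A k ++ [G] ++ rep U d ++ rep A (d - k)

/-- `δ̄(k) = U^{d-k} A^d G U^k A^d`. -/
def dbar (d k : ℕ) : List Base := rep U (d - k) ++ rep A d ++ [G] ++ rep U k ++ rep A d

set_option linter.unusedVariables false

lemma rep_len (b n) : (rep b n).length = n := by simp [rep]

lemma at'_append_left {l m : List Base} {i : ℕ} (h : i < l.length) :
    at' (l ++ m) i = at' l i := List.getD_append _ _ _ _ h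

lemma at'_append_right {l m : List Base} {i : ℕ} (h : l.length ≤ i) :
    at' (l ++ m) i = at' m (i - l.length) := List.getD_append_right _ _ _ _ h

lemma at'_rep_lt {b : Base} {n i : ℕ} (h : i < n) : at' (rep b n) i = b := by
  unfold at' rep
  rw [List.getD_eq_getElem _ _ (by simpa using h)]
  simp

lemma at'_repA (n i : ℕ) : at' (rep A n) i = A := by
  by_cases h : i < n
  · exact at'_rep_lt h
  · exact List.getD_eq_default _ _ (by simp [rep]; omega)

lemma dseq_assoc (d k : ℕ) :
    dseq d k = rep U d ++ (rep A k ++ ([G] ++ (rep U d ++ rep A (d - k)))) := by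
  simp [dseq, List.append_assoc]

lemma dbar_assoc (d k : ℕ) :
    dbar d k = rep U (d - k) ++ (rep A d ++ ([G] ++ (rep U k ++ rep A d))) := by
  simp [dbar, List.append_assoc]

lemma dseq_len {d k : ℕ} (hk : k ≤ d) : (dseq d k).length = 3 * d + 1 := by
  simp [dseq, rep]; omega

lemma dbar_len {d k : ℕ} (hk : k ≤ d) : (dbar d k).length = 3 * d + 1 := by
  simp [dbar, rep]; omega


lemma at'_rep_skip {b : Base} {l : List Base} {n i : ℕ} (h : n ≤ i) :
    at' (rep b n ++ l) i = at' l (i - n) := by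
  rw [at'_append_right (by rw [rep_len]; exact h), rep_len]

lemma at'_rep_hit {b : Base} {l : List Base} {n i : ℕ} (h : i < n) :
    at' (rep b n ++ l) i = b := by
  rw [at'_append_left (by rw [rep_len]; exact h), at'_rep_lt h]

lemma at'_G_skip {l : List Base} {i : ℕ} (h : 1 ≤ i) :
    at' ([G] ++ l) i = at' l (i - 1) := by
  rw [at'_append_right (by simpa using h)]; simp

lemma dseq_U1 {d k i : ℕ} (h : i < d) : at' (dseq d k) i = U := by
  rw [dseq_assoc, at'_rep_hit h]

lemma dseq_A1 {d k i : ℕ} (h1 : d ≤ i) (h2 : i < d + k) : at' (dseq d k) i = A := by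
  rw [dseq_assoc, at'_rep_skip h1, at'_rep_hit (by omega)]

lemma dseq_G {d k : ℕ} : at' (dseq d k) (d + k) = G := by
  rw [dseq_assoc, at'_rep_skip (by omega), at'_rep_skip (by omega)]
  have : d + k - d - k = 0 := by omega
  rw [this]; rfl

lemma dseq_U2 {d k i : ℕ} (h1 : d + k + 1 ≤ i) (h2 : i < 2 * d + k + 1) :
    at' (dseq d k) i = U := by
  rw [dseq_assoc, at'_rep_skip (by omega), at'_rep_skip (by omega),
    at'_G_skip (by omega), at'_rep_hit (by omega)]

lemma dseq_A2 {d k i : ℕ} (h1 : 2 * d + k + 1 ≤ i) : at' (dseq d k) i = A := by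
  rw [dseq_assoc, at'_rep_skip (by omega), at'_rep_skip (by omega),
    at'_G_skip (by omega), at'_rep_skip (by omega), at'_repA]

lemma dbar_U1 {d k i : ℕ} (h : i < d - k) : at' (dbar d k) i = U := by
  rw [dbar_assoc, at'_rep_hit h]

lemma dbar_A1 {d k i : ℕ} (h1 : d - k ≤ i) (h2 : i < 2 * d - k) : at' (dbar d k) i = A := by
  rw [dbar_assoc, at'_rep_skip h1, at'_rep_hit (by omega)]

lemma dbar_U2 {d k i : ℕ} (h1 : 2 * d - k + 1 ≤ i) (h2 : i < 2 * d + 1) (hk : k ≤ d) :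
    at' (dbar d k) i = U := by
  rw [dbar_assoc, at'_rep_skip (by omega), at'_rep_skip (by omega),
    at'_G_skip (by omega), at'_rep_hit (by omega)]

lemma dbar_A2 {d k i : ℕ} (h1 : 2 * d + 1 ≤ i) (hk : k ≤ d) : at' (dbar d k) i = A := by
  rw [dbar_assoc, at'_rep_skip (by omega), at'_rep_skip (by omega),
    at'_G_skip (by omega), at'_rep_skip (by omega), at'_repA]

lemma dseq_ne_C {d k : ℕ} (hk : k ≤ d) (i : ℕ) : at' (dseq d k) i ≠ C := by
  by_cases h1 : i < d
  · rw [dseq_U1 h1]; simp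
  by_cases h2 : i < d + k
  · rw [dseq_A1 (by omega) h2]; simp
  by_cases h3 : i = d + k
  · subst h3; rw [dseq_G]; simp
  by_cases h4 : i < 2 * d + k + 1
  · rw [dseq_U2 (by omega) h4]; simp
  · rw [dseq_A2 (by omega)]; simp

lemma dseq_A_iff {d k i : ℕ} (hk : k ≤ d) (hi : i < 3 * d + 1) :
    at' (dseq d k) i = A ↔ ((d ≤ i ∧ i < d + k) ∨ (2 * d + k + 1 ≤ i)) := by
  constructor
  · intro h
    by_cases h1 : i < d
    · rw [dseq_U1 h1] at h; exact absurd h (by simp)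
    by_cases h2 : i < d + k
    · left; omega
    by_cases h3 : i = d + k
    · subst h3; rw [dseq_G] at h; exact absurd h (by simp)
    by_cases h4 : i < 2 * d + k + 1
    · rw [dseq_U2 (by omega) h4] at h; exact absurd h (by simp)
    · right; omega
  · rintro (⟨h1, h2⟩ | h1)
    · exact dseq_A1 h1 h2
    · exact dseq_A2 h1

section Constr
variable (d k : ℕ)

def P1 : Finset (ℕ × ℕ) := (Finset.range d).image (fun t => (k + t, 3 * d - t))

lemma mem_P1 {p : ℕ × ℕ} : p ∈ P1 d k ↔ ∃ t < d, p = (k + t, 3 * d - t) := by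
  simp only [P1, Finset.mem_image, Finset.mem_range]
  constructor
  · rintro ⟨t, ht, rfl⟩; exact ⟨t, ht, rfl⟩
  · rintro ⟨t, ht, rfl⟩; exact ⟨t, ht, rfl⟩

lemma valid_P1 (h0 : 0 < k) (hk : k < d) : ValidSS (dseq d k) (P1 d k) := by
  constructor
  · intro p hp
    obtain ⟨t, ht, rfl⟩ := (mem_P1 d k).mp hp
    refine ⟨by simp; omega, by rw [dseq_len hk.le]; simp, ?_⟩
    by_cases h : t < d - k
    · rw [show ((k + t, 3 * d - t) : ℕ × ℕ).1 = k + t from rfl,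
        show ((k + t, 3 * d - t) : ℕ × ℕ).2 = 3 * d - t from rfl,
        dseq_U1 (by omega), dseq_A2 (by omega)]
      exact Or.inr (Or.inl ⟨rfl, rfl⟩)
    · rw [show ((k + t, 3 * d - t) : ℕ × ℕ).1 = k + t from rfl,
        show ((k + t, 3 * d - t) : ℕ × ℕ).2 = 3 * d - t from rfl,
        dseq_A1 (by omega) (by omega), dseq_U2 (by omega) (by omega)]
      exact Or.inl ⟨rfl, rfl⟩
  · intro p hp q hq hne
    obtain ⟨t, ht, rfl⟩ := (mem_P1 d k).mp hp
    obtain ⟨s, hs, rfl⟩ := (mem_P1 d k).mp hq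
    have hts : t ≠ s := by
      intro h; exact hne (by rw [h])
    refine ⟨by simp; omega, by simp; omega, by simp; omega, by simp; omega⟩

lemma numSP_P1 (h0 : 0 < k) (hk : k < d) : numSP (P1 d k) = d - 1 := by
  unfold numSP
  have he : (P1 d k).filter (fun p => (p.1 + 1, p.2 - 1) ∈ P1 d k ∧ p.1 + 4 ≤ p.2) =
      (Finset.range (d - 1)).image (fun t => (k + t, 3 * d - t)) := by
    ext p
    simp only [Finset.mem_filter, Finset.mem_image, Finset.mem_range, mem_P1]
    constructor
    · rintro ⟨⟨t, ht, rfl⟩, ⟨s, hs, hse⟩, hgap⟩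
      refine ⟨t, ?_, rfl⟩
      simp only [Prod.mk.injEq] at hse
      omega
    · rintro ⟨t, ht, rfl⟩
      refine ⟨⟨t, by omega, rfl⟩, ⟨t + 1, by omega, ?_⟩, by simp; omega⟩
      simp only [Prod.mk.injEq]
      omega
  rw [he, Finset.card_image_of_injOn, Finset.card_range]
  intro a _ b _ hab
  simp only [Prod.mk.injEq] at hab
  omega

end Constr

lemma wc_one_A {d k : ℕ} (hk : k ≤ d) {i j : ℕ} (h : isWC (at' (dseq d k) i) (at' (dseq d k) j)) :
    (at' (dseq d k) i = A ∧ at' (dseq d k) j = U) ∨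
    (at' (dseq d k) i = U ∧ at' (dseq d k) j = A) := by
  rcases h with h | h | h | h
  · exact Or.inl h
  · exact Or.inr h
  · exact absurd h.1 (dseq_ne_C hk i)
  · exact absurd h.2 (dseq_ne_C hk j)

lemma card_le_d {d k : ℕ} (h0 : 0 < k) (hk : k < d) {P : Finset (ℕ × ℕ)}
    (hP : ValidSS (dseq d k) P) : P.card ≤ d := by
  set AIdx : Finset ℕ := (Finset.range (3 * d + 1)).filter (fun i => at' (dseq d k) i = A) with hAI
  have hcard : AIdx.card = d := by
    have : AIdx = Finset.Ico d (d + k) ∪ Finset.Ico (2 * d + k + 1) (3 * d + 1) := by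
      ext i
      simp only [hAI, Finset.mem_filter, Finset.mem_range, Finset.mem_union, Finset.mem_Ico]
      constructor
      · rintro ⟨h1, h2⟩
        rw [dseq_A_iff hk.le h1] at h2
        omega
      · intro h
        refine ⟨by omega, (dseq_A_iff hk.le (by omega)).mpr (by omega)⟩
    rw [this, Finset.card_union_of_disjoint, Nat.card_Ico, Nat.card_Ico]
    · omega
    · rw [Finset.disjoint_left]
      intro a h1 h2
      simp only [Finset.mem_Ico] at h1 h2
      omega
  rw [← hcard]
  apply Finset.card_le_card_of_injOn (fun p => if at' (dseq d k) p.1 = A then p.1 else p.2)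
  · intro p hp
    obtain ⟨hgap, hlen, hwc⟩ := hP.1 p hp
    rw [dseq_len hk.le] at hlen
    rcases wc_one_A hk.le hwc with ⟨h1, h2⟩ | ⟨h1, h2⟩
    · simp only [hAI, Finset.mem_coe, Finset.mem_filter, Finset.mem_range, if_pos h1]
      exact ⟨by omega, h1⟩
    · simp only [Finset.mem_coe]; rw [h1]
      simp only [hAI, Finset.mem_filter, Finset.mem_range]
      rw [if_neg (by simp)]
      exact ⟨hlen, h2⟩
  · intro p hp q hq heq
    by_contra hne
    obtain ⟨h1, h2, h3, h4⟩ := hP.2 p hp q hq hne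
    by_cases hp1 : at' (dseq d k) p.1 = A <;> by_cases hq1 : at' (dseq d k) q.1 = A <;>
      simp only [if_pos, if_neg, hp1, hq1, if_true, if_false] at heq
    · exact h1 heq
    · exact h2 heq
    · exact h3 heq
    · exact h4 heq

lemma upper_bound {d k : ℕ} (h0 : 0 < k) (hk : k < d) {P : Finset (ℕ × ℕ)}
    (hP : ValidSS (dseq d k) P) : numSP P ≤ d - 1 := by
  rcases P.eq_empty_or_nonempty with rfl | hne
  · simp [numSP]
  obtain ⟨p0, hp0, hmin⟩ : ∃ p0 ∈ P, ∀ q ∈ P, p0.1 ≤ q.1 := by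
    obtain ⟨p0, hp0, he⟩ := Finset.mem_image.mp ((P.image Prod.fst).min'_mem (hne.image _))
    exact ⟨p0, hp0, fun q hq => he ▸ Finset.min'_le _ _ (Finset.mem_image_of_mem _ hq)⟩
  have hle : numSP P ≤ (P.erase p0).card := by
    apply Finset.card_le_card_of_injOn (fun p => (p.1 + 1, p.2 - 1))
    · intro p hp
      rw [Finset.mem_coe, Finset.mem_filter] at hp
      rw [Finset.mem_coe, Finset.mem_erase]
      refine ⟨?_, hp.2.1⟩
      intro h
      have h2 := hmin p hp.1
      rw [← h] at h2
      simp at h2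
    · intro a ha b hb heq
      simp only [Finset.mem_coe, Finset.mem_filter] at ha hb
      have ha4 := ha.2.2
      have hb4 := hb.2.2
      simp only [Prod.mk.injEq] at heq
      have : a.1 = b.1 := by omega
      have : a.2 = b.2 := by omega
      exact Prod.ext ‹a.1 = b.1› ‹a.2 = b.2›
  have := Finset.card_erase_of_mem hp0
  have := card_le_d h0 hk hP
  have := Finset.card_pos.mpr hne
  omega

section Concat

lemma T_len {d k : ℕ} (hk : k ≤ d) : (dseq d k ++ [G] ++ dbar d k).length = 6 * d + 3 := by
  simp [dseq_len hk, dbar_len hk]; omega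

lemma T_left {d k : ℕ} (hk : k ≤ d) {i : ℕ} (h : i < 3 * d + 1) :
    at' (dseq d k ++ [G] ++ dbar d k) i = at' (dseq d k) i := by
  rw [List.append_assoc, at'_append_left (by rw [dseq_len hk]; omega)]

lemma T_right {d k : ℕ} (hk : k ≤ d) {i : ℕ} (h : 3 * d + 2 ≤ i) :
    at' (dseq d k ++ [G] ++ dbar d k) i = at' (dbar d k) (i - (3 * d + 2)) := by
  rw [at'_append_right (by simp [dseq_len hk]; omega)]
  simp [dseq_len hk]

variable (d k : ℕ)

def Q : Finset (ℕ × ℕ) :=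
  ((Finset.range (d + k)).image (fun t => (t, 6 * d + 2 - t))) ∪
  ((Finset.range (2 * d - k)).image (fun t => (d + k + 1 + t, 5 * d + 1 - k - t)))

lemma mem_Q {p : ℕ × ℕ} : p ∈ Q d k ↔
    (∃ t < d + k, p = (t, 6 * d + 2 - t)) ∨
    (∃ t < 2 * d - k, p = (d + k + 1 + t, 5 * d + 1 - k - t)) := by
  simp only [Q, Finset.mem_union, Finset.mem_image, Finset.mem_range]
  constructor
  · rintro (⟨t, ht, rfl⟩ | ⟨t, ht, rfl⟩)
    · exact Or.inl ⟨t, ht, rfl⟩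
    · exact Or.inr ⟨t, ht, rfl⟩
  · rintro (⟨t, ht, rfl⟩ | ⟨t, ht, rfl⟩)
    · exact Or.inl ⟨t, ht, rfl⟩
    · exact Or.inr ⟨t, ht, rfl⟩

lemma valid_Q (h0 : 0 < k) (hk : k < d) :
    ValidSS (dseq d k ++ [G] ++ dbar d k) (Q d k) := by
  constructor
  · intro p hp
    rcases (mem_Q d k).mp hp with ⟨t, ht, rfl⟩ | ⟨t, ht, rfl⟩
    · refine ⟨by simp; omega, by rw [T_len hk.le]; simp; omega, ?_⟩
      rw [show ((t, 6 * d + 2 - t) : ℕ × ℕ).1 = t from rfl,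
        show ((t, 6 * d + 2 - t) : ℕ × ℕ).2 = 6 * d + 2 - t from rfl,
        T_left hk.le (by omega), T_right hk.le (by omega)]
      have hidx : 6 * d + 2 - t - (3 * d + 2) = 3 * d - t := by omega
      rw [hidx]
      by_cases h : t < d
      · rw [dseq_U1 h, dbar_A2 (by omega) hk.le]
        exact Or.inr (Or.inl ⟨rfl, rfl⟩)
      · rw [dseq_A1 (by omega) (by omega), dbar_U2 (by omega) (by omega) hk.le]
        exact Or.inl ⟨rfl, rfl⟩
    · refine ⟨by simp; omega, by rw [T_len hk.le]; simp; omega, ?_⟩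
      rw [show ((d + k + 1 + t, 5 * d + 1 - k - t) : ℕ × ℕ).1 = d + k + 1 + t from rfl,
        show ((d + k + 1 + t, 5 * d + 1 - k - t) : ℕ × ℕ).2 = 5 * d + 1 - k - t from rfl,
        T_left hk.le (by omega), T_right hk.le (by omega)]
      have hidx : 5 * d + 1 - k - t - (3 * d + 2) = 2 * d - k - 1 - t := by omega
      rw [hidx]
      by_cases h : t < d
      · rw [dseq_U2 (by omega) (by omega), dbar_A1 (by omega) (by omega)]
        exact Or.inr (Or.inl ⟨rfl, rfl⟩)
      · rw [dseq_A2 (by omega), dbar_U1 (by omega)]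
        exact Or.inl ⟨rfl, rfl⟩
  · intro p hp q hq hne
    rcases (mem_Q d k).mp hp with ⟨t, ht, rfl⟩ | ⟨t, ht, rfl⟩ <;>
      rcases (mem_Q d k).mp hq with ⟨s, hs, rfl⟩ | ⟨s, hs, rfl⟩
    · have hts : t ≠ s := fun h => hne (by rw [h])
      refine ⟨by simp; omega, by simp; omega, by simp; omega, by simp; omega⟩
    · refine ⟨by simp; omega, by simp; omega, by simp; omega, by simp; omega⟩
    · refine ⟨by simp; omega, by simp; omega, by simp; omega, by simp; omega⟩
    · have hts : t ≠ s := fun h => hne (by rw [h])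
      refine ⟨by simp; omega, by simp; omega, by simp; omega, by simp; omega⟩

lemma numSP_Q (h0 : 0 < k) (hk : k < d) : numSP (Q d k) = 3 * d - 2 := by
  unfold numSP
  have he : (Q d k).filter (fun p => (p.1 + 1, p.2 - 1) ∈ Q d k ∧ p.1 + 4 ≤ p.2) =
      ((Finset.range (d + k - 1)).image (fun t => (t, 6 * d + 2 - t))) ∪
      ((Finset.range (2 * d - k - 1)).image (fun t => (d + k + 1 + t, 5 * d + 1 - k - t))) := by
    ext p
    simp only [Finset.mem_filter, Finset.mem_union, Finset.mem_image, Finset.mem_range, mem_Q]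
    constructor
    · rintro ⟨⟨t, ht, rfl⟩ | ⟨t, ht, rfl⟩, hin, hgap⟩
      · left
        refine ⟨t, ?_, rfl⟩
        rcases hin with ⟨s, hs, hse⟩ | ⟨s, hs, hse⟩ <;>
          simp only [Prod.mk.injEq] at hse <;> omega
      · right
        refine ⟨t, ?_, rfl⟩
        simp only at hgap
        omega
    · rintro (⟨t, ht, rfl⟩ | ⟨t, ht, rfl⟩)
      · refine ⟨Or.inl ⟨t, by omega, rfl⟩, Or.inl ⟨t + 1, by omega, ?_⟩, by simp; omega⟩
        simp only [Prod.mk.injEq]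
        exact ⟨by simp, by omega⟩
      · refine ⟨Or.inr ⟨t, by omega, rfl⟩, Or.inr ⟨t + 1, by omega, ?_⟩, by simp; omega⟩
        simp only [Prod.mk.injEq]
        exact ⟨by omega, by omega⟩
  rw [he, Finset.card_union_of_disjoint, Finset.card_image_of_injOn, Finset.card_image_of_injOn,
    Finset.card_range, Finset.card_range]
  · omega
  · intro a _ b _ hab
    simp only [Prod.mk.injEq] at hab
    omega
  · intro a _ b _ hab
    simp only [Prod.mk.injEq] at hab
    omega
  · rw [Finset.disjoint_left]
    rintro p hp hq
    simp only [Finset.mem_image, Finset.mem_range] at hp hq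
    obtain ⟨t, ht, rfl⟩ := hp
    obtain ⟨s, hs, hse⟩ := hq
    simp only [Prod.mk.injEq] at hse
    omega
end Concat

/-- Within `δ(k)` alone, the maximum number of stacking pairs is `d-1`; and `δ(k)`
together with its conjugate `δ̄(k)` (placed disjointly, here separated by a `G`) can
form `3d-2` stacking pairs. -/
theorem delta_stacking_counts (d k : ℕ) (h0 : 0 < k) (hk : k < d) :
    IsGreatest {N : ℕ | ∃ P : Finset (ℕ × ℕ), ValidSS (dseq d k) P ∧ numSP P = N}
      (d - 1) ∧
    (∃ P : Finset (ℕ × ℕ), ValidSS (dseq d k ++ [G] ++ dbar d k) P ∧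
      numSP P = 3 * d - 2) := by
  refine ⟨⟨⟨P1 d k, valid_P1 d k h0 hk, numSP_P1 d k h0 hk⟩, ?_⟩,
    ⟨Q d k, valid_Q d k h0 hk, numSP_Q d k h0 hk⟩⟩
  rintro N ⟨P, hP, rfl⟩
  exact upper_bound h0 hk hP
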